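/- Let n ≥ 1 be an integer and let s be an integer with 0 < s < 2^{n−1}. Define, for an integer i, F(s, i) = (s + 2^i·(2^n − 2s)/√2) / (√2 · √(s² + 2^{2i}·(2^n − 2s)²/2)). Then there exists an integer i with −n ≤ i ≤ n such that F(s, i) ≥ (1 + √2)/√6. -/
import Mathlib

lemma aux_ineq (a c : ℝ) (ha : 0 < a) (h1 : a ≤ Real.sqrt 2 * c) (h2 : c ≤ Real.sqrt 2 * a) :
    (1 + Real.sqrt 2) / Real.sqrt 6 ≤ (a + c) / (Real.sqrt 2 * Real.sqrt (a ^ 2 + c ^ 2)) := by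
  have s2 : Real.sqrt 2 ^ 2 = 2 := Real.sq_sqrt (by norm_num)
  have s2pos : 0 < Real.sqrt 2 := Real.sqrt_pos.2 (by norm_num)
  have hc : 0 < c := by nlinarith
  have hsum : 0 < a ^ 2 + c ^ 2 := by positivity
  have hS : 0 < Real.sqrt (a ^ 2 + c ^ 2) := Real.sqrt_pos.2 hsum
  have s6pos : 0 < Real.sqrt 6 := Real.sqrt_pos.2 (by norm_num)
  rw [div_le_div_iff₀ s6pos (by positivity)]
  have expand : (Real.sqrt 2 * c - a) * (Real.sqrt 2 * a - c)
      = 3 * (a * c) - Real.sqrt 2 * (a ^ 2 + c ^ 2) := by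
    linear_combination a * c * s2
  have hprod : 0 ≤ (Real.sqrt 2 * c - a) * (Real.sqrt 2 * a - c) :=
    mul_nonneg (by linarith) (by linarith)
  rw [expand] at hprod
  have key : Real.sqrt 2 * (a ^ 2 + c ^ 2) ≤ 3 * (a * c) := by linarith
  have hS2 : Real.sqrt (a ^ 2 + c ^ 2) ^ 2 = a ^ 2 + c ^ 2 := Real.sq_sqrt hsum.le
  have s6 : Real.sqrt 6 ^ 2 = 6 := Real.sq_sqrt (by norm_num)
  have hL : ((1 + Real.sqrt 2) * (Real.sqrt 2 * Real.sqrt (a ^ 2 + c ^ 2))) ^ 2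
      = 6 * (a ^ 2 + c ^ 2) + 4 * Real.sqrt 2 * (a ^ 2 + c ^ 2) := by
    rw [mul_pow, mul_pow, hS2, s2]
    linear_combination (2 * (a ^ 2 + c ^ 2)) * s2
  have hR : ((a + c) * Real.sqrt 6) ^ 2 = 6 * (a + c) ^ 2 := by
    rw [mul_pow, s6]; ring
  have hsq : ((1 + Real.sqrt 2) * (Real.sqrt 2 * Real.sqrt (a ^ 2 + c ^ 2))) ^ 2
      ≤ ((a + c) * Real.sqrt 6) ^ 2 := by
    rw [hL, hR]; nlinarith [key]
  exact le_of_pow_le_pow_left₀ two_ne_zero (by positivity) hsq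

/-- `F(s, i) = (s + 2^i (2^n − 2s)/√2) / (√2 · √(s² + 2^{2i} (2^n − 2s)²/2))`,
the inner product `⟨+|φ⟩` from the PostBQP = PP algorithm. -/
noncomputable def postSelF (n : ℕ) (s : ℤ) (i : ℤ) : ℝ :=
  ((s : ℝ) + (2 : ℝ) ^ i * ((2 : ℝ) ^ n - 2 * (s : ℝ)) / Real.sqrt 2) /
    (Real.sqrt 2 *
      Real.sqrt ((s : ℝ) ^ 2 + (2 : ℝ) ^ (2 * i) * ((2 : ℝ) ^ n - 2 * (s : ℝ)) ^ 2 / 2))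

/-- For `n ≥ 1` and an integer `s` with `0 < s < 2^{n−1}`, there exists an integer
`i ∈ [−n, n]` with `F(s, i) ≥ (1 + √2)/√6`. -/
theorem exists_good_postselection (n : ℕ) (hn : 1 ≤ n) (s : ℤ) (hs : 0 < s)
    (hs' : s < 2 ^ (n - 1)) :
    ∃ i : ℤ, -(n : ℤ) ≤ i ∧ i ≤ (n : ℤ) ∧
      (1 + Real.sqrt 2) / Real.sqrt 6 ≤ postSelF n s i := by
  have hn' : n - 1 + 1 = n := Nat.succ_pred_eq_of_pos hn
  have hpZ : (2 : ℤ) ^ n = 2 * 2 ^ (n - 1) := by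
    conv_lhs => rw [← hn']
    ring
  have hbZ : (2 : ℤ) ≤ 2 ^ n - 2 * s := by omega
  have hs1 : (1 : ℤ) ≤ s := hs
  set a : ℝ := (s : ℝ) with ha_def
  have ha : 0 < a := by show (0:ℝ) < (s:ℝ); exact_mod_cast hs
  have ha1 : 1 ≤ a := by show (1:ℝ) ≤ (s:ℝ); exact_mod_cast hs1
  set b : ℝ := (2 : ℝ) ^ n - 2 * a with hb_def
  have hb2 : (2 : ℝ) ≤ b := by
    show (2:ℝ) ≤ (2:ℝ)^n - 2 * (s:ℝ)
    exact_mod_cast hbZ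
  have hb1 : (1 : ℝ) ≤ b := by linarith
  have hb : 0 < b := by linarith
  have hbub : b ≤ (2 : ℝ) ^ n := by
    rw [hb_def]; nlinarith
  have haub : a < (2 : ℝ) ^ n := by
    have h0 : a < (2 : ℝ) ^ (n - 1) := by
      show (s:ℝ) < (2:ℝ)^(n-1); exact_mod_cast hs'
    calc a < (2:ℝ) ^ (n-1) := h0
    _ ≤ (2:ℝ) ^ n := pow_le_pow_right₀ (by norm_num) (Nat.sub_le n 1)
  have hx : 0 < a / b := div_pos ha hb
  set i : ℤ := ⌈Real.logb 2 (a / b)⌉ with hi_def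
  refine ⟨i, ?_, ?_, ?_⟩
  · -- -n ≤ i
    have h1 : (2 : ℝ) ^ (-(n:ℤ)) ≤ a / b := by
      rw [zpow_neg, zpow_natCast]
      rw [le_div_iff₀ hb, inv_mul_le_iff₀ (by positivity)]
      calc b ≤ (2:ℝ)^n := hbub
      _ ≤ (2:ℝ)^n * a := by nlinarith
    have h2 : (((-(n:ℤ)) : ℤ) : ℝ) ≤ Real.logb 2 (a / b) := by
      rw [Real.le_logb_iff_rpow_le (by norm_num) hx, Real.rpow_intCast]
      exact h1
    have h3 := Int.ceil_le_ceil h2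
    calc -(n:ℤ) = ⌈((-(n:ℤ) : ℤ) : ℝ)⌉ := (Int.ceil_intCast _).symm
    _ ≤ i := h3
  · -- i ≤ n
    refine Int.ceil_le.2 ?_
    rw [show (((n:ℤ)) : ℝ) = ((n:ℕ) : ℝ) by push_cast; ring]
    rw [Real.logb_le_iff_le_rpow (by norm_num) hx, Real.rpow_natCast]
    rw [div_le_iff₀ hb]; nlinarith
  · -- the inequality
    set t : ℝ := (2:ℝ) ^ i with ht_def
    have ht : 0 < t := by positivity
    have ht_ge : a / b ≤ t := by
      have h2 : Real.logb 2 (a/b) ≤ (i : ℝ) := Int.le_ceil _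
      calc a / b = (2:ℝ) ^ Real.logb 2 (a/b) := (Real.rpow_logb (by norm_num) (by norm_num) hx).symm
      _ ≤ (2:ℝ) ^ (i:ℝ) := Real.rpow_le_rpow_of_exponent_le (by norm_num) h2
      _ = t := by rw [Real.rpow_intCast]
    have ht_le : t ≤ 2 * (a / b) := by
      have h2 : (i : ℝ) ≤ Real.logb 2 (a/b) + 1 := le_of_lt (by
        have := Int.ceil_lt_add_one (Real.logb 2 (a/b))
        exact_mod_cast this)
      calc t = (2:ℝ) ^ (i:ℝ) := by rw [Real.rpow_intCast]
      _ ≤ (2:ℝ) ^ (Real.logb 2 (a/b) + 1) := Real.rpow_le_rpow_of_exponent_le (by norm_num) h2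
      _ = (2:ℝ) ^ Real.logb 2 (a/b) * 2 := by rw [Real.rpow_add (by norm_num), Real.rpow_one]
      _ = 2 * (a/b) := by rw [Real.rpow_logb (by norm_num) (by norm_num) hx]; ring
    have htb1 : a ≤ t * b := by
      rw [div_le_iff₀ hb] at ht_ge; linarith
    have htb2 : t * b ≤ 2 * a := by
      have h0 : 0 ≤ (2 * (a/b) - t) * b := mul_nonneg (by linarith) hb.le
      have h1 : 2 * (a/b) * b = 2 * a := by field_simp
      nlinarith [h0, h1]
    have s2 : Real.sqrt 2 ^ 2 = 2 := Real.sq_sqrt (by norm_num)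
    have s2pos : 0 < Real.sqrt 2 := Real.sqrt_pos.2 (by norm_num)
    set c : ℝ := t * b / Real.sqrt 2 with hc_def
    have hsc : Real.sqrt 2 * c = t * b := by
      rw [hc_def, mul_div_assoc', mul_comm, mul_div_assoc, div_self (ne_of_gt s2pos), mul_one]
    have h1 : a ≤ Real.sqrt 2 * c := by rw [hsc]; exact htb1
    have h2 : c ≤ Real.sqrt 2 * a := by
      rw [hc_def, div_le_iff₀ s2pos]
      calc t * b ≤ 2 * a := htb2
      _ = Real.sqrt 2 * a * Real.sqrt 2 := by linear_combination (-a) * s2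
    have key := aux_ineq a c ha h1 h2
    have hcsq : a ^ 2 + c ^ 2 = a ^ 2 + (2:ℝ) ^ (2*i) * b ^ 2 / 2 := by
      have h2i : (2:ℝ) ^ (2*i) = t ^ 2 := by
        rw [ht_def, ← zpow_natCast ((2:ℝ)^i) 2, ← zpow_mul]
        congr 1
        push_cast; ring
      rw [hc_def, h2i, div_pow, mul_pow, s2]
    unfold postSelF
    rw [← ha_def, ← hb_def, ← ht_def, ← hcsq, ← hc_def]
    exact key
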